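/- If (f,q) is a positive solution of the full Ginzburg-Landau system on [−a,a] such that f is even and q is odd, then the restriction to [0,a] satisfies f'(0)=0, q(0)=0, f(0)∈(0,1), q'(0)≥0 and f'(a)=0, q'(a)=h₀; i.e. it solves the symmetric initial-value formulation. -/

import Mathlib

open Set Filter

set_option maxHeartbeats 1000000

theorem stmt_5 (a κ h₀ : ℝ) (ha : 0 < a) (hκ : 0 < κ) (hh₀ : 0 < h₀)
    (f q : ℝ → ℝ) (hf2 : ContDiff ℝ 2 f) (hq2 : ContDiff ℝ 2 q)
    (hfeq : ∀ x ∈ Set.Ioo (-a) a,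
      (1 / κ ^ 2) * deriv (deriv f) x = f x * ((f x) ^ 2 + (q x) ^ 2 - 1))
    (hqeq : ∀ x ∈ Set.Ioo (-a) a, deriv (deriv q) x = q x * (f x) ^ 2)
    (hbf1 : deriv f (-a) = 0) (hbf2 : deriv f a = 0)
    (hbq1 : deriv q (-a) = h₀) (hbq2 : deriv q a = h₀)
    (hfpos : ∀ x ∈ Set.Icc (-a) a, 0 < f x)
    (heven : ∀ x ∈ Set.Icc (-a) a, f (-x) = f x)
    (hodd : ∀ x ∈ Set.Icc (-a) a, q (-x) = -q x)
    (hnot1 : ∃ x ∈ Set.Icc (-a) a, f x ≠ 1) :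
    deriv f 0 = 0 ∧ q 0 = 0 ∧ f 0 ∈ Set.Ioo (0 : ℝ) 1 ∧ 0 ≤ deriv q 0 ∧
    deriv f a = 0 ∧ deriv q a = h₀ := by
  have h0mem : (0:ℝ) ∈ Set.Icc (-a) a := ⟨by linarith, by linarith⟩
  have hamem : a ∈ Set.Icc (-a) a := ⟨by linarith, le_rfl⟩
  have hIccnhds0 : Set.Icc (-a) a ∈ nhds (0:ℝ) := Icc_mem_nhds (by linarith) (by linarith)
  -- regularity
  have hf11 : ContDiff ℝ (1+1) f := by norm_num; exact hf2
  have hq11 : ContDiff ℝ (1+1) q := by norm_num; exact hq2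
  have hdf1 : ContDiff ℝ 1 (deriv f) := (contDiff_succ_iff_deriv.mp hf11).2.2
  have hdq1 : ContDiff ℝ 1 (deriv q) := (contDiff_succ_iff_deriv.mp hq11).2.2
  have hfdiff : Differentiable ℝ f := (contDiff_succ_iff_deriv.mp hf11).1
  have hqdiff : Differentiable ℝ q := (contDiff_succ_iff_deriv.mp hq11).1
  have hdfdiff : Differentiable ℝ (deriv f) := hdf1.differentiable one_ne_zero
  have hdqdiff : Differentiable ℝ (deriv q) := hdq1.differentiable one_ne_zero
  have hcf : Continuous f := hf2.continuous
  have hcq : Continuous q := hq2.continuous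
  have hcf' : Continuous (deriv f) := hdf1.continuous
  have hcq' : Continuous (deriv q) := hdq1.continuous
  have hcf'' : Continuous (deriv (deriv f)) := hdf1.continuous_deriv le_rfl
  -- q 0 = 0
  have hq0 : q 0 = 0 := by have := hodd 0 h0mem; simp at this; linarith
  -- deriv f 0 = 0
  have hdf0 : deriv f 0 = 0 := by
    have hev : (fun x => f (-x)) =ᶠ[nhds 0] f :=
      Filter.eventuallyEq_of_mem hIccnhds0 (fun x hx => heven x hx)
    have h1 := hev.deriv_eq
    rw [deriv_comp_neg] at h1
    simp at h1; linarith
  -- equation extended to Icc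
  have heqIcc : ∀ x ∈ Set.Icc (-a) a,
      deriv (deriv f) x = κ^2 * (f x * ((f x)^2 + (q x)^2 - 1)) := by
    have hEq : Set.EqOn (fun x => (1/κ^2) * deriv (deriv f) x)
        (fun x => f x * ((f x)^2 + (q x)^2 - 1)) (Set.Icc (-a) a) := by
      have h := Set.EqOn.closure (fun x hx => hfeq x hx)
        (continuous_const.mul hcf'')
        (hcf.mul (((hcf.pow 2).add (hcq.pow 2)).sub continuous_const))
      rwa [closure_Ioo (by linarith : (-a) ≠ a)] at h
    intro x hx
    have h := hEq hx
    simp only at h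
    have hk : κ^2 ≠ 0 := by positivity
    field_simp at h
    linear_combination h
  have hf0pos : 0 < f 0 := hfpos 0 h0mem
  -- f 0 < 1
  have hf01 : f 0 < 1 := by
    by_contra hge
    push_neg at hge
    obtain ⟨x₀, hx₀, hmax⟩ := (isCompact_Icc (a := -a) (b := a)).exists_isMaxOn
      ⟨0, h0mem⟩ hcf.continuousOn
    have hM1 : 1 ≤ f x₀ := le_trans hge (hmax h0mem)
    -- key : a max point with zero derivative and positive second derivative is impossible
    have key : ∀ y ∈ Set.Icc (-a) a, IsMaxOn f (Set.Icc (-a) a) y → deriv f y = 0 →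
        0 < deriv (deriv f) y → False := by
      intro y hy hymax hdy hpos
      obtain ⟨U, hU, hUopen, hUy⟩ := mem_nhds_iff.mp
        (hcf''.continuousAt.preimage_mem_nhds (Ioi_mem_nhds hpos))
      obtain ⟨ε, hε, hball⟩ := Metric.isOpen_iff.mp hUopen y hUy
      rcases eq_or_lt_of_le hy.2 with hya | hya
      · -- y = a : look left
        have hy0 : 0 < y := by rw [hya]; exact ha
        set b := max (y - ε/2) 0 with hbdef
        have hb1 : b < y := max_lt (by linarith) hy0
        have hbIcc : Set.Icc b y ⊆ Metric.ball y ε := by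
          intro z hz
          rw [Metric.mem_ball, Real.dist_eq, abs_lt]
          constructor
          · have : y - ε/2 ≤ b := le_max_left _ _
            linarith [hz.1]
          · linarith [hz.2, hε]
        have hbsub : Set.Icc b y ⊆ Set.Icc (-a) a := by
          intro z hz
          refine ⟨by linarith [hz.1, le_max_right (y - ε/2) (0:ℝ), ha], ?_⟩
          rw [← hya]
          exact hz.2
        have hmono : StrictMonoOn (deriv f) (Set.Icc b y) :=
          strictMonoOn_of_deriv_pos (convex_Icc _ _) hcf'.continuousOn
            (fun z hz => by
              rw [interior_Icc] at hz
              exact hU (hball (hbIcc ⟨hz.1.le, hz.2.le⟩)))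
        have hanti : StrictAntiOn f (Set.Icc b y) :=
          strictAntiOn_of_deriv_neg (convex_Icc _ _) (hcf.continuousOn)
            (fun z hz => by
              rw [interior_Icc] at hz
              have := hmono ⟨hz.1.le, hz.2.le⟩ (right_mem_Icc.mpr hb1.le) hz.2
              rwa [hdy] at this)
        have h1 := hanti (left_mem_Icc.mpr hb1.le) (right_mem_Icc.mpr hb1.le) hb1
        have h2 := hymax (hbsub (left_mem_Icc.mpr hb1.le))
        exact absurd h2 (not_le.mpr h1)
      · -- y < a : look right
        set b := min (y + ε/2) a with hbdef
        have hb1 : y < b := lt_min (by linarith) hya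
        have hbIcc : Set.Icc y b ⊆ Metric.ball y ε := by
          intro z hz
          rw [Metric.mem_ball, Real.dist_eq, abs_lt]
          constructor
          · linarith [hz.1, hε]
          · have : b ≤ y + ε/2 := min_le_left _ _
            linarith [hz.2]
        have hbsub : Set.Icc y b ⊆ Set.Icc (-a) a := by
          intro z hz
          exact ⟨le_trans hy.1 hz.1, le_trans hz.2 (min_le_right _ _)⟩
        have hmono : StrictMonoOn (deriv f) (Set.Icc y b) :=
          strictMonoOn_of_deriv_pos (convex_Icc _ _) hcf'.continuousOn
            (fun z hz => by
              rw [interior_Icc] at hz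
              exact hU (hball (hbIcc ⟨hz.1.le, hz.2.le⟩)))
        have hmono2 : StrictMonoOn f (Set.Icc y b) :=
          strictMonoOn_of_deriv_pos (convex_Icc _ _) (hcf.continuousOn)
            (fun z hz => by
              rw [interior_Icc] at hz
              have := hmono (left_mem_Icc.mpr hb1.le) ⟨hz.1.le, hz.2.le⟩ hz.1
              rwa [hdy] at this)
        have h1 := hmono2 (left_mem_Icc.mpr hb1.le) (right_mem_Icc.mpr hb1.le) hb1
        have h2 := hymax (hbsub (right_mem_Icc.mpr hb1.le))
        exact absurd h2 (not_le.mpr h1)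
    rcases eq_or_lt_of_le hM1 with hMeq | hMgt
    · -- case max = 1 : rigidity
      have hfle : ∀ z ∈ Set.Icc (-a) a, f z ≤ 1 := fun z hz => le_trans (hmax hz) hMeq.symm.le
      have hf0 : f 0 = 1 := le_antisymm (hfle 0 h0mem) hge
      -- first Gronwall step : g = (-f' + 2κ(1-f)) e^{-2κx} is antitone on [0,a]
      have hgderiv : ∀ x : ℝ, HasDerivAt
          (fun x => (-(deriv f x) + 2*κ*(1 - f x)) * Real.exp (-(2*κ*x)))
          ((-(deriv (deriv f) x) + 2*κ*(0 - deriv f x)) * Real.exp (-(2*κ*x))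
            + (-(deriv f x) + 2*κ*(1 - f x)) * (Real.exp (-(2*κ*x)) * -(2*κ*1))) x := by
        intro x
        have h1 : HasDerivAt (deriv f) (deriv (deriv f) x) x := (hdfdiff x).hasDerivAt
        have h2 : HasDerivAt f (deriv f x) x := (hfdiff x).hasDerivAt
        have hA : HasDerivAt (fun x => -(deriv f x) + 2*κ*(1 - f x))
            (-(deriv (deriv f) x) + 2*κ*(0 - deriv f x)) x :=
          h1.neg.add (((hasDerivAt_const x (1:ℝ)).sub h2).const_mul (2*κ))
        have hE : HasDerivAt (fun x => Real.exp (-(2*κ*x))) (Real.exp (-(2*κ*x)) * -(2*κ*1)) x := by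
          exact (((hasDerivAt_id x).const_mul (2*κ)).neg).exp
        exact hA.mul hE
      have hgant : AntitoneOn (fun x => (-(deriv f x) + 2*κ*(1 - f x)) * Real.exp (-(2*κ*x)))
          (Set.Icc 0 a) := by
        apply antitoneOn_of_deriv_nonpos (convex_Icc _ _)
        · exact (((hcf'.neg).add (continuous_const.mul (continuous_const.sub hcf))).mul
            ((continuous_const.mul continuous_id).neg.rexp)).continuousOn
        · intro x _
          exact ((hgderiv x).differentiableAt).differentiableWithinAt
        · intro x hx
          rw [interior_Icc] at hx
          rw [(hgderiv x).deriv]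
          have hx' : x ∈ Set.Icc (-a) a := ⟨by linarith [hx.1], hx.2.le⟩
          have hfx := hfpos x hx'
          have hfl := hfle x hx'
          have heq := heqIcc x hx'
          rw [heq]
          have hstuff : 0 ≤ (f x)^3 + f x * (q x)^2 - 5*(f x) + 4 := by
            nlinarith [mul_nonneg hfx.le (sq_nonneg (q x)),
              mul_nonneg (sub_nonneg.mpr hfl) (by nlinarith : (0:ℝ) ≤ 4 - f x - (f x)^2)]
          have hZ : 0 ≤ κ^2 * (f x * ((f x)^2 + (q x)^2 - 1)) + (2*κ)^2*(1 - f x) := by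
            nlinarith [mul_nonneg (sq_nonneg κ) hstuff]
          have hexp := Real.exp_pos (-(2*κ*x))
          nlinarith [mul_nonneg hexp.le hZ]
      have hg0 : ∀ x ∈ Set.Icc 0 a, (-(deriv f x) + 2*κ*(1 - f x)) * Real.exp (-(2*κ*x)) ≤ 0 := by
        intro x hx
        have h := hgant (left_mem_Icc.mpr ha.le) hx hx.1
        simp only [hdf0, hf0, mul_zero, neg_zero, sub_self, zero_add, Real.exp_zero,
          mul_one, zero_mul] at h
        simpa using h
      -- second Gronwall step : k = (1-f) e^{2κx} antitone on [0,a]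
      have hkderiv : ∀ x : ℝ, HasDerivAt (fun x => (1 - f x) * Real.exp (2*κ*x))
          ((0 - deriv f x) * Real.exp (2*κ*x) + (1 - f x) * (Real.exp (2*κ*x) * (2*κ*1))) x := by
        intro x
        have h2 : HasDerivAt f (deriv f x) x := (hfdiff x).hasDerivAt
        have hA : HasDerivAt (fun x => 1 - f x) (0 - deriv f x) x :=
          (hasDerivAt_const x (1:ℝ)).sub h2
        have hE : HasDerivAt (fun x => Real.exp (2*κ*x)) (Real.exp (2*κ*x) * (2*κ*1)) x :=
          ((hasDerivAt_id x).const_mul (2*κ)).exp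
        exact hA.mul hE
      have hkant : AntitoneOn (fun x => (1 - f x) * Real.exp (2*κ*x)) (Set.Icc 0 a) := by
        apply antitoneOn_of_deriv_nonpos (convex_Icc _ _)
        · exact ((continuous_const.sub hcf).mul ((continuous_const.mul continuous_id).rexp)).continuousOn
        · intro x _
          exact ((hkderiv x).differentiableAt).differentiableWithinAt
        · intro x hx
          rw [interior_Icc] at hx
          rw [(hkderiv x).deriv]
          have hB : -(deriv f x) + 2*κ*(1 - f x) ≤ 0 := by
            by_contra hcon
            push_neg at hcon
            have := hg0 x ⟨hx.1.le, hx.2.le⟩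
            nlinarith [Real.exp_pos (-(2*κ*x))]
          nlinarith [Real.exp_pos (2*κ*x), mul_nonneg (Real.exp_pos (2*κ*x)).le (neg_nonneg.mpr hB)]
      have hfone : ∀ x ∈ Set.Icc 0 a, f x = 1 := by
        intro x hx
        have h := hkant (left_mem_Icc.mpr ha.le) hx hx.1
        simp only [hf0, sub_self, zero_mul] at h
        have hexp := Real.exp_pos (2*κ*x)
        have hfl := hfle x ⟨by linarith [hx.1], hx.2⟩
        have h1 : 1 - f x ≤ 0 := by
          by_contra hc
          push_neg at hc
          nlinarith
        linarith
      -- hence q = 0 on (0,a) and deriv q a = 0, contradiction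
      have hd1 : ∀ z ∈ Set.Ioo (0:ℝ) a, deriv f z = 0 := by
        intro z hz
        have hn : Set.Ioo (0:ℝ) a ∈ nhds z := isOpen_Ioo.mem_nhds hz
        have hf1 : f =ᶠ[nhds z] (fun _ => 1) :=
          Filter.eventuallyEq_of_mem hn (fun w hw => hfone w ⟨hw.1.le, hw.2.le⟩)
        rw [hf1.deriv_eq]
        simp
      have hq_zero : ∀ x ∈ Set.Ioo (0:ℝ) a, q x = 0 := by
        intro x hx
        have hn : Set.Ioo (0:ℝ) a ∈ nhds x := isOpen_Ioo.mem_nhds hx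
        have hdd : deriv (deriv f) x = 0 := by
          have hev : deriv f =ᶠ[nhds x] (fun _ => 0) :=
            Filter.eventuallyEq_of_mem hn (fun w hw => hd1 w hw)
          rw [hev.deriv_eq]
          simp
        have hx' : x ∈ Set.Ioo (-a) a := ⟨by linarith [hx.1], hx.2⟩
        have h := hfeq x hx'
        rw [hdd, hfone x ⟨hx.1.le, hx.2.le⟩] at h
        have hq2' : (q x)^2 = 0 := by nlinarith
        exact pow_eq_zero_iff (by norm_num) |>.mp hq2'
      have hdq_zero : ∀ x ∈ Set.Ioo (0:ℝ) a, deriv q x = 0 := by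
        intro x hx
        have hn : Set.Ioo (0:ℝ) a ∈ nhds x := isOpen_Ioo.mem_nhds hx
        have hev : q =ᶠ[nhds x] (fun _ => 0) :=
          Filter.eventuallyEq_of_mem hn (fun w hw => hq_zero w hw)
        rw [hev.deriv_eq]
        simp
      have hfin : deriv q a = 0 := by
        have hEq : Set.EqOn (deriv q) (fun _ => 0) (Set.Icc 0 a) := by
          have h := Set.EqOn.closure (fun x hx => hdq_zero x hx) hcq' continuous_const
          rwa [closure_Ioo (ne_of_lt ha)] at h
        exact hEq (right_mem_Icc.mpr ha.le)
      rw [hbq2] at hfin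
      linarith
    · -- case max > 1
      rcases eq_or_lt_of_le hx₀.1 with hend | hint
      · -- x₀ = -a : transfer to a
        have hfa : f a = f x₀ := by
          rw [← hend]
          exact (heven a hamem).symm
        have hmaxa : IsMaxOn f (Set.Icc (-a) a) a := by
          intro z hz
          simp only [Set.mem_setOf_eq]
          rw [hfa]
          exact hmax hz
        apply key a hamem hmaxa hbf2
        rw [heqIcc a hamem, hfa]
        have hfp := hfpos a hamem
        have h1 : 0 < f x₀ * ((f x₀)^2 + (q a)^2 - 1) := by
          nlinarith [sq_nonneg (q a), mul_nonneg (hfa ▸ hfp).le (sq_nonneg (q a))]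
        exact mul_pos (pow_pos hκ 2) h1
      · rcases eq_or_lt_of_le hx₀.2 with hend2 | hint2
        · subst hend2
          apply key x₀ hx₀ hmax hbf2
          rw [heqIcc x₀ hx₀]
          have hfp := hfpos x₀ hx₀
          have h1 : 0 < f x₀ * ((f x₀)^2 + (q x₀)^2 - 1) := by
            nlinarith [sq_nonneg (q x₀)]
          exact mul_pos (pow_pos hκ 2) h1
        · -- interior
          have hloc : IsLocalMax f x₀ := hmax.isLocalMax (Icc_mem_nhds hint hint2)
          apply key x₀ hx₀ hmax hloc.deriv_eq_zero
          rw [heqIcc x₀ hx₀]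
          have hfp := hfpos x₀ hx₀
          have h1 : 0 < f x₀ * ((f x₀)^2 + (q x₀)^2 - 1) := by
            nlinarith [sq_nonneg (q x₀)]
          exact mul_pos (pow_pos hκ 2) h1
  -- 0 ≤ deriv q 0
  have hdq0 : 0 ≤ deriv q 0 := by
    by_contra hneg
    push_neg at hneg
    obtain ⟨U, hU, hUopen, hU0⟩ := mem_nhds_iff.mp
      (hcq'.continuousAt.preimage_mem_nhds (Iio_mem_nhds hneg))
    obtain ⟨ε, hε, hball⟩ := Metric.isOpen_iff.mp hUopen 0 hU0
    set δ := min (ε/2) a with hδdef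
    have hδpos : 0 < δ := lt_min (by linarith) ha
    have hδa : δ ≤ a := min_le_right _ _
    have hballmem : ∀ z ∈ Set.Icc (0:ℝ) δ, deriv q z < 0 := by
      intro z hz
      apply hU
      apply hball
      rw [Metric.mem_ball, Real.dist_eq, sub_zero, abs_lt]
      constructor
      · linarith [hz.1]
      · have : δ ≤ ε/2 := min_le_left _ _
        linarith [hz.2]
    have hanti : StrictAntiOn q (Set.Icc 0 δ) :=
      strictAntiOn_of_deriv_neg (convex_Icc _ _) hcq.continuousOn
        (fun z hz => by
          rw [interior_Icc] at hz
          exact hballmem z ⟨hz.1.le, hz.2.le⟩)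
    have hqnegδ : ∀ x, 0 < x → x ≤ δ → q x < 0 := by
      intro x h1 h2
      have := hanti (left_mem_Icc.mpr hδpos.le) ⟨h1.le, h2⟩ h1
      rwa [hq0] at this
    -- helper : if q < 0 on (0,m) then deriv q antitone on [0,m]
    have hant : ∀ m, 0 < m → m ≤ a → (∀ y, 0 < y → y < m → q y < 0) →
        AntitoneOn (deriv q) (Set.Icc 0 m) := by
      intro m hm0 hma hqneg
      apply antitoneOn_of_deriv_nonpos (convex_Icc _ _) hcq'.continuousOn
        hdqdiff.differentiableOn
      intro x hx
      rw [interior_Icc] at hx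
      have hx' : x ∈ Set.Ioo (-a) a := ⟨by linarith [hx.1], lt_of_lt_of_le hx.2 hma⟩
      rw [hqeq x hx']
      have hqx := hqneg x hx.1 hx.2
      nlinarith [sq_nonneg (f x)]
    by_cases hB : ∃ x, x ∈ Set.Icc 0 a ∧ 0 < x ∧ 0 ≤ q x
    · obtain ⟨x₁, hx₁⟩ := hB
      set B := {x : ℝ | x ∈ Set.Icc 0 a ∧ 0 < x ∧ 0 ≤ q x} with hBdef
      have hBne : B.Nonempty := ⟨x₁, hx₁⟩
      have hBbdd : BddBelow B := ⟨0, fun z hz => hz.1.1⟩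
      set s := sInf B with hsdef
      have hδs : δ ≤ s := by
        apply le_csInf hBne
        intro z hz
        by_contra hcon
        push_neg at hcon
        exact absurd hz.2.2 (not_le.mpr (hqnegδ z hz.2.1 hcon.le))
      have hs0 : 0 < s := lt_of_lt_of_le hδpos hδs
      have hsa : s ≤ a := le_trans (csInf_le hBbdd hx₁) hx₁.1.2
      have hsq : 0 ≤ q s := by
        have hcl : IsClosed {x : ℝ | 0 ≤ q x} := isClosed_le continuous_const hcq
        have hsub : closure B ⊆ {x : ℝ | 0 ≤ q x} :=
          hcl.closure_subset_iff.mpr (fun z hz => hz.2.2)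
        exact hsub (csInf_mem_closure hBne hBbdd)
      have hqnegs : ∀ y, 0 < y → y < s → q y < 0 := by
        intro y hy1 hy2
        by_contra hcon
        push_neg at hcon
        have hyB : y ∈ B := ⟨⟨hy1.le, by linarith⟩, hy1, hcon⟩
        exact absurd (csInf_le hBbdd hyB) (not_le.mpr hy2)
      have hAnt := hant s hs0 hsa hqnegs
      have hdqneg : ∀ z ∈ Set.Ioo (0:ℝ) s, deriv q z < 0 := fun z hz =>
        lt_of_le_of_lt (hAnt (left_mem_Icc.mpr hs0.le) ⟨hz.1.le, hz.2.le⟩ hz.1.le) hneg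
      have hanti2 : StrictAntiOn q (Set.Icc 0 s) :=
        strictAntiOn_of_deriv_neg (convex_Icc _ _) hcq.continuousOn
          (fun z hz => hdqneg z (by rwa [interior_Icc] at hz))
      have := hanti2 (left_mem_Icc.mpr hs0.le) (right_mem_Icc.mpr hs0.le) hs0
      rw [hq0] at this
      linarith
    · push_neg at hB
      have hqnega : ∀ y, 0 < y → y < a → q y < 0 := by
        intro y h1 h2
        exact hB y ⟨h1.le, h2.le⟩ h1
      have hAnt := hant a ha le_rfl hqnega
      have := hAnt (left_mem_Icc.mpr ha.le) (right_mem_Icc.mpr ha.le) ha.le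
      rw [hbq2] at this
      linarith
  exact ⟨hdf0, hq0, ⟨hf0pos, hf01⟩, hdq0, hbf2, hbq2⟩
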